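/- The number of set partitions of [n] (n ≥ 2) avoiding both patterns 12/3 and 1/24/3 is 2(n−1). -/

import Mathlib

/-- The set partition `σ` of `[n]` (as an equivalence relation on `Fin n`)
contains the pattern `π` (a set partition of `[k]`): some increasing choice of
`k` elements of `[n]` has the same same-block relation as `π`. -/
def SContains {n k : ℕ} (σ : Setoid (Fin n)) (π : Setoid (Fin k)) : Prop :=
  ∃ f : Fin k → Fin n, StrictMono f ∧ ∀ a b : Fin k, σ.r (f a) (f b) ↔ π.r a b

/-- The set partition associated to an RGF word: `i` and `j` are in the same
block iff the letters agree. -/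
def pat (l : List ℕ) : Setoid (Fin l.length) := Setoid.ker l.get


set_option linter.unreachableTactic false
set_option linter.unusedTactic false
set_option linter.unusedVariables false

section
variable {n : ℕ}

def relA (n m : ℕ) : Setoid (Fin n) :=
  ⟨fun a b => a = b ∨ (m ≤ a.val ∧ m ≤ b.val), by
    refine ⟨fun a => Or.inl rfl, ?_, ?_⟩
    · rintro a b (rfl | h); exacts [Or.inl rfl, Or.inr ⟨h.2, h.1⟩]
    · rintro a b c (rfl | h) (rfl | h2) <;> tauto⟩

def relB (n m : ℕ) : Setoid (Fin n) :=
  ⟨fun a b => a = b ∨ ((a.val = 0 ∨ m ≤ a.val) ∧ (b.val = 0 ∨ m ≤ b.val)), by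
    refine ⟨fun a => Or.inl rfl, ?_, ?_⟩
    · rintro a b (rfl | h); exacts [Or.inl rfl, Or.inr ⟨h.2, h.1⟩]
    · rintro a b c (rfl | h) (rfl | h2) <;> tauto⟩

lemma contains112_iff {n : ℕ} (σ : Setoid (Fin n)) :
    SContains σ (pat [1, 1, 2]) ↔
      ∃ a b c : Fin n, a < b ∧ b < c ∧ σ.r a b ∧ ¬ σ.r a c := by
  constructor
  · rintro ⟨f, hf, hiff⟩
    refine ⟨f (0 : Fin 3), f (1 : Fin 3), f (2 : Fin 3), hf (by decide), hf (by decide), ?_, ?_⟩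
    · exact (hiff (0 : Fin 3) (1 : Fin 3)).2 rfl
    · exact fun h => by unfold pat at hiff; simpa [pat, Setoid.ker_def, Function.onFun] using (hiff (0 : Fin 3) (2 : Fin 3)).1 h
  · rintro ⟨a, b, c, hab, hbc, hr, hnr⟩
    have hnr' : ¬ σ.r b c := fun h => hnr (σ.trans hr h)
    refine ⟨![a, b, c], ?_, ?_⟩
    · intro x y hxy
      fin_cases x <;> fin_cases y <;>
        first
        | exact absurd hxy (by decide)
        | simpa using hab
        | simpa using hbc
        | simpa using hab.trans hbc
    · intro p q
      have h1 : σ.r a a := σ.refl a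
      have h2 : σ.r b b := σ.refl b
      have h3 : σ.r c c := σ.refl c
      have h4 : σ.r b a := σ.symm hr
      have h5 : ¬ σ.r c a := fun h => hnr (σ.symm h)
      have h6 : ¬ σ.r c b := fun h => hnr' (σ.symm h)
      fin_cases p <;> fin_cases q <;> unfold pat <;> simp_all [pat, Setoid.ker_def, Function.onFun] <;> decide

lemma contains1232_iff {n : ℕ} (σ : Setoid (Fin n)) :
    SContains σ (pat [1, 2, 3, 2]) ↔
      ∃ a b c d : Fin n, a < b ∧ b < c ∧ c < d ∧ σ.r b d ∧
        ¬ σ.r a b ∧ ¬ σ.r b c ∧ ¬ σ.r a c := by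
  constructor
  · rintro ⟨f, hf, hiff⟩
    refine ⟨f (0 : Fin 4), f (1 : Fin 4), f (2 : Fin 4), f (3 : Fin 4),
      hf (by decide), hf (by decide), hf (by decide), ?_, ?_, ?_, ?_⟩
    · exact (hiff (1 : Fin 4) (3 : Fin 4)).2 rfl
    · exact fun h => by unfold pat at hiff; simpa [pat, Setoid.ker_def, Function.onFun] using (hiff (0 : Fin 4) (1 : Fin 4)).1 h
    · exact fun h => by unfold pat at hiff; simpa [pat, Setoid.ker_def, Function.onFun] using (hiff (1 : Fin 4) (2 : Fin 4)).1 h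
    · exact fun h => by unfold pat at hiff; simpa [pat, Setoid.ker_def, Function.onFun] using (hiff (0 : Fin 4) (2 : Fin 4)).1 h
  · rintro ⟨a, b, c, d, hab, hbc, hcd, hbd, h1, h2, h3⟩
    have h4 : ¬ σ.r a d := fun h => h1 (σ.trans h (σ.symm hbd))
    have h5 : ¬ σ.r c d := fun h => h2 (σ.trans hbd (σ.symm h))
    refine ⟨![a, b, c, d], ?_, ?_⟩
    · intro x y hxy
      fin_cases x <;> fin_cases y <;>
        first
        | exact absurd hxy (by decide)
        | simpa using hab
        | simpa using hbc
        | simpa using hcd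
        | simpa using hab.trans hbc
        | simpa using hbc.trans hcd
        | simpa using (hab.trans hbc).trans hcd
    · intro p q
      have r1 : σ.r a a := σ.refl a
      have r2 : σ.r b b := σ.refl b
      have r3 : σ.r c c := σ.refl c
      have r4 : σ.r d d := σ.refl d
      have r5 : σ.r d b := σ.symm hbd
      have s1 : ¬ σ.r b a := fun h => h1 (σ.symm h)
      have s2 : ¬ σ.r c b := fun h => h2 (σ.symm h)
      have s3 : ¬ σ.r c a := fun h => h3 (σ.symm h)
      have s4 : ¬ σ.r d a := fun h => h4 (σ.symm h)
      have s5 : ¬ σ.r d c := fun h => h5 (σ.symm h)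
      fin_cases p <;> fin_cases q <;> unfold pat <;> simp_all [pat, Setoid.ker_def, Function.onFun] <;> decide

lemma relA_avoids (m : ℕ) :
    ¬ SContains (relA n m) (pat [1, 1, 2]) ∧ ¬ SContains (relA n m) (pat [1, 2, 3, 2]) := by
  constructor
  · rw [contains112_iff]
    rintro ⟨a, b, c, hab, hbc, hr, hnr⟩
    rcases hr with rfl | ⟨h1, h2⟩
    · exact absurd rfl hab.ne
    · exact hnr (Or.inr ⟨h1, h2.trans (Fin.le_of_lt hbc)⟩)
  · rw [contains1232_iff]
    rintro ⟨a, b, c, d, hab, hbc, hcd, hbd, h1, h2, h3⟩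
    rcases hbd with rfl | ⟨k1, k2⟩
    · exact absurd rfl (hbc.trans hcd).ne
    · exact h2 (Or.inr ⟨k1, k1.trans (Fin.le_of_lt hbc)⟩)

lemma relB_avoids (m : ℕ) (hm : 2 ≤ m) :
    ¬ SContains (relB n m) (pat [1, 1, 2]) ∧ ¬ SContains (relB n m) (pat [1, 2, 3, 2]) := by
  constructor
  · rw [contains112_iff]
    rintro ⟨a, b, c, hab, hbc, hr, hnr⟩
    rcases hr with rfl | ⟨h1, h2⟩
    · exact absurd rfl hab.ne
    · have hb : m ≤ b.val := by
        rcases h2 with h | h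
        · exfalso; have := Fin.lt_def.1 hab; omega
        · exact h
      exact hnr (Or.inr ⟨h1, Or.inr (hb.trans (Fin.le_of_lt hbc))⟩)
  · rw [contains1232_iff]
    rintro ⟨a, b, c, d, hab, hbc, hcd, hbd, h1, h2, h3⟩
    rcases hbd with rfl | ⟨k1, k2⟩
    · exact absurd rfl (hbc.trans hcd).ne
    · have hb : m ≤ b.val := by
        rcases k1 with h | h
        · exfalso; have := Fin.lt_def.1 hab; omega
        · exact h
      exact h2 (Or.inr ⟨Or.inr hb, Or.inr (hb.trans (Fin.le_of_lt hbc))⟩)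

lemma classify (σ : Setoid (Fin n)) (hn : 2 ≤ n)
    (h1 : ¬ SContains σ (pat [1, 1, 2])) (h2 : ¬ SContains σ (pat [1, 2, 3, 2])) :
    (∃ m < n, σ = relA n m) ∨ (∃ m, 2 ≤ m ∧ m < n ∧ σ = relB n m) := by
  classical
  rw [contains112_iff] at h1
  rw [contains1232_iff] at h2
  push_neg at h1 h2
  by_cases htriv : ∀ a b : Fin n, σ.r a b → a = b
  · left
    refine ⟨n - 1, by omega, ?_⟩
    apply Setoid.ext
    intro a b
    constructor
    · intro h; exact Or.inl (htriv a b h)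
    · rintro (rfl | ⟨ha, hb⟩)
      · exact σ.refl a
      · have : a = b := by
          apply Fin.ext
          have := a.isLt; have := b.isLt; omega
        exact this ▸ σ.refl a
  · push_neg at htriv
    obtain ⟨a0, b0, hr0, hne0⟩ := htriv
    set S : Finset (Fin n) := Finset.univ.filter (fun b => ∃ a, a < b ∧ σ.r a b) with hS
    have hSne : S.Nonempty := by
      rcases lt_trichotomy a0 b0 with h | h | h
      · exact ⟨b0, by simp [hS]; exact ⟨a0, h, hr0⟩⟩
      · exact absurd h hne0
      · exact ⟨a0, by simp [hS]; exact ⟨b0, h, σ.symm hr0⟩⟩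
    set j : Fin n := S.min' hSne with hj
    have hjS : j ∈ S := S.min'_mem hSne
    obtain ⟨i, hij, hrij⟩ : ∃ a, a < j ∧ σ.r a j := by simpa [hS] using hjS
    have B : ∀ a b : Fin n, a < b → σ.r a b → j ≤ b := by
      intro a b h hr
      exact S.min'_le b (by simp [hS]; exact ⟨a, h, hr⟩)
    have A : ∀ k : Fin n, j ≤ k → σ.r i k := by
      intro k hk
      rcases eq_or_lt_of_le hk with rfl | h
      · exact hrij
      · exact h1 i j k hij h hrij
    have C : ∀ a : Fin n, a < j → a ≠ i → ∀ b : Fin n, a ≠ b → ¬ σ.r a b := by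
      intro a ha hai b hab hr
      rcases lt_or_gt_of_ne hab with h | h
      · have hjb : j ≤ b := B a b h hr
        have hib : σ.r i b := A b hjb
        have hrai : σ.r a i := σ.trans hr (σ.symm hib)
        rcases lt_trichotomy a i with h' | h' | h'
        · exact absurd (B a i h' hrai) (not_le.2 hij)
        · exact hai h'
        · exact absurd (B i a h' (σ.symm hrai)) (not_le.2 ha)
      · exact absurd (B b a h (σ.symm hr)) (not_le.2 ha)
    have relAcase : i.val + 1 = j.val → σ = relA n i.val := by
      intro hkey
      apply Setoid.ext
      intro a b
      constructor
      · intro hr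
        by_cases hab : a = b
        · exact Or.inl hab
        · right
          have main : ∀ x y : Fin n, x < y → σ.r x y →
              i.val ≤ x.val ∧ i.val ≤ y.val := by
            intro x y hxy hrxy
            have hjy : j ≤ y := B x y hxy hrxy
            have hjy' : j.val ≤ y.val := hjy
            refine ⟨?_, by omega⟩
            rcases lt_or_ge x j with h | h
            · by_cases hxi : x = i
              · rw [hxi]
              · exact absurd hrxy (C x h hxi y hxy.ne)
            · have : j.val ≤ x.val := h
              omega
          rcases lt_or_gt_of_ne hab with h | h
          · exact main a b h hr
          · exact (main b a h (σ.symm hr)).symm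
      · rintro (rfl | ⟨ha, hb⟩)
        · exact σ.refl a
        · have key0 : ∀ x : Fin n, i.val ≤ x.val → σ.r i x := by
            intro x hx
            rcases eq_or_lt_of_le hx with h | h
            · have : x = i := Fin.ext h.symm
              exact this ▸ σ.refl x
            · exact A x (by rw [Fin.le_def]; omega)
          exact σ.trans (σ.symm (key0 a ha)) (key0 b hb)
    have key : i.val + 1 = j.val ∨ i.val = 0 := by
      by_contra hk
      push_neg at hk
      obtain ⟨hk2, hk1⟩ := hk
      have hij0 : i.val < j.val := hij
      have hjn : j.val < n := j.isLt
      have hi0 : 0 < i.val := Nat.pos_of_ne_zero hk1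
      have hij' : i.val + 1 < j.val := by omega
      obtain ⟨p, hp⟩ : ∃ p : Fin n, p.val = i.val - 1 := ⟨⟨i.val - 1, by omega⟩, rfl⟩
      obtain ⟨r, hr'⟩ : ∃ r : Fin n, r.val = i.val + 1 := ⟨⟨i.val + 1, by omega⟩, rfl⟩
      have hpi : p < i := by rw [Fin.lt_def]; omega
      have hir : i < r := by rw [Fin.lt_def]; omega
      have hrj : r < j := by rw [Fin.lt_def]; omega
      have hpj : p < j := hpi.trans hij
      have cp := C p hpj (fun h => by rw [h] at hp; omega)
      have cr := C r hrj (fun h => by rw [h] at hr'; omega)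
      have hpr : σ.r p r :=
        h2 p i r j hpi hir hrj hrij (cp i hpi.ne) (fun h => cr i hir.ne' (σ.symm h))
      exact cp r (fun h => by rw [h] at hp; omega) hpr
    rcases key with hkey | hkey
    · exact Or.inl ⟨i.val, i.isLt, relAcase hkey⟩
    · by_cases hj1 : i.val + 1 = j.val
      · exact Or.inl ⟨i.val, i.isLt, relAcase hj1⟩
      · right
        have hij0 : i.val < j.val := hij
        have hj2 : 2 ≤ j.val := by omega
        refine ⟨j.val, hj2, j.isLt, ?_⟩
        apply Setoid.ext
        intro a b
        have hi0 : i = ⟨0, by omega⟩ := Fin.ext hkey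
        constructor
        · intro hr
          by_cases hab : a = b
          · exact Or.inl hab
          · right
            have main : ∀ x y : Fin n, x < y → σ.r x y →
                (x.val = 0 ∨ j.val ≤ x.val) ∧ (y.val = 0 ∨ j.val ≤ y.val) := by
              intro x y hxy hrxy
              have hjy : j.val ≤ y.val := B x y hxy hrxy
              refine ⟨?_, Or.inr hjy⟩
              rcases lt_or_ge x j with h | h
              · by_cases hxi : x = i
                · left; rw [hxi, hi0]
                · exact absurd hrxy (C x h hxi y hxy.ne)
              · exact Or.inr h
            rcases lt_or_gt_of_ne hab with h | h
            · exact main a b h hr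
            · exact (main b a h (σ.symm hr)).symm
        · rintro (rfl | ⟨ha, hb⟩)
          · exact σ.refl a
          · have key0 : ∀ x : Fin n, (x.val = 0 ∨ j.val ≤ x.val) → σ.r i x := by
              intro x hx
              rcases hx with hx | hx
              · have : x = i := by rw [hi0]; exact Fin.ext hx
                exact this ▸ σ.refl x
              · exact A x hx
            exact σ.trans (σ.symm (key0 a ha)) (key0 b hb)

lemma relA_injOn (hn : 2 ≤ n) : Set.InjOn (relA n) (Finset.range n) := by
  have aux : ∀ m1 m2, m1 < m2 → m2 < n → relA n m1 ≠ relA n m2 := by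
    intro m1 m2 h hn' heq
    have h1 : (relA n m1).r ⟨m1, by omega⟩ ⟨n - 1, by omega⟩ :=
      Or.inr ⟨le_refl _, (by omega : m1 ≤ n - 1)⟩
    rw [heq] at h1
    rcases h1 with h1 | ⟨h1, h2⟩
    · have := Fin.mk.injEq .. ▸ h1
      simp only [Fin.mk.injEq] at h1
      omega
    · simp only at h1
      omega
  intro m1 hm1 m2 hm2 heq
  simp only [Finset.coe_range, Set.mem_Iio] at hm1 hm2
  rcases lt_trichotomy m1 m2 with h | h | h
  · exact absurd heq (aux m1 m2 h hm2)
  · exact h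
  · exact absurd heq.symm (aux m2 m1 h hm1)

lemma relB_injOn (hn : 2 ≤ n) : Set.InjOn (relB n) (Finset.Ico 2 n) := by
  have aux : ∀ m1 m2, 2 ≤ m1 → m1 < m2 → m2 < n → relB n m1 ≠ relB n m2 := by
    intro m1 m2 h2' h hn' heq
    have h1 : (relB n m1).r ⟨m1, by omega⟩ ⟨n - 1, by omega⟩ :=
      Or.inr ⟨Or.inr (le_refl _), Or.inr (by omega : m1 ≤ n - 1)⟩
    rw [heq] at h1
    rcases h1 with h1 | ⟨h1, h2⟩
    · simp only [Fin.mk.injEq] at h1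
      omega
    · simp only at h1
      omega
  intro m1 hm1 m2 hm2 heq
  simp only [Finset.coe_Ico, Set.mem_Ico] at hm1 hm2
  rcases lt_trichotomy m1 m2 with h | h | h
  · exact absurd heq (aux m1 m2 hm1.1 h hm2.2)
  · exact h
  · exact absurd heq.symm (aux m2 m1 hm2.1 h hm1.2)

lemma relAB_disjoint (hn : 2 ≤ n) [DecidableEq (Setoid (Fin n))] :
    Disjoint ((Finset.range n).image (relA n)) ((Finset.Ico 2 n).image (relB n)) := by
  rw [Finset.disjoint_left]
  rintro σ hA hB
  obtain ⟨m1, hm1, rfl⟩ := Finset.mem_image.1 hA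
  obtain ⟨m2, hm2, heq⟩ := Finset.mem_image.1 hB
  rw [Finset.mem_range] at hm1
  rw [Finset.mem_Ico] at hm2
  have hn3 : 3 ≤ n := by omega
  have h1 : (relB n m2).r ⟨0, by omega⟩ ⟨n - 1, by omega⟩ :=
    Or.inr ⟨Or.inl (rfl : (0:ℕ) = 0), Or.inr (by omega : m2 ≤ n - 1)⟩
  rw [heq] at h1
  have hm10 : m1 = 0 := by
    rcases h1 with h1 | ⟨h1, h2⟩
    · simp only [Fin.mk.injEq] at h1; omega
    · simp only at h1; omega
  have h3 : (relA n m1).r ⟨1, by omega⟩ ⟨n - 1, by omega⟩ :=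
    Or.inr ⟨(by omega : m1 ≤ 1), (by omega : m1 ≤ n - 1)⟩
  rw [← heq] at h3
  rcases h3 with h3 | ⟨h3, h4⟩
  · simp only [Fin.mk.injEq] at h3; omega
  · simp only at h3; omega

end

theorem stmt11 (n : ℕ) (hn : 2 ≤ n) :
    Nat.card {σ : Setoid (Fin n) //
      ¬ SContains σ (pat [1, 1, 2]) ∧ ¬ SContains σ (pat [1, 2, 3, 2])} =
    2 * (n - 1) := by
  classical
  have hset : {σ : Setoid (Fin n) |
      ¬ SContains σ (pat [1, 1, 2]) ∧ ¬ SContains σ (pat [1, 2, 3, 2])} =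
      ↑((Finset.range n).image (relA n) ∪ (Finset.Ico 2 n).image (relB n)) := by
    ext σ
    simp only [Set.mem_setOf_eq, Finset.coe_union, Set.mem_union, Finset.coe_image,
      Set.mem_image, Finset.mem_coe, Finset.mem_range, Finset.mem_Ico,
      Finset.coe_range, Set.mem_Iio, Finset.coe_Ico, Set.mem_Ico]
    constructor
    · rintro ⟨h1, h2⟩
      rcases classify σ hn h1 h2 with ⟨m, hm, rfl⟩ | ⟨m, hm2, hmn, rfl⟩
      · exact Or.inl ⟨m, hm, rfl⟩
      · exact Or.inr ⟨m, ⟨hm2, hmn⟩, rfl⟩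
    · rintro (⟨m, hm, rfl⟩ | ⟨m, ⟨hm2, hmn⟩, rfl⟩)
      · exact relA_avoids m
      · exact relB_avoids m hm2
  have h1 : Nat.card {σ : Setoid (Fin n) //
      ¬ SContains σ (pat [1, 1, 2]) ∧ ¬ SContains σ (pat [1, 2, 3, 2])} =
      Set.ncard {σ : Setoid (Fin n) |
      ¬ SContains σ (pat [1, 1, 2]) ∧ ¬ SContains σ (pat [1, 2, 3, 2])} :=
    Nat.card_coe_set_eq _
  rw [h1, hset, Set.ncard_coe_finset]
  rw [Finset.card_union_of_disjoint (relAB_disjoint hn)]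
  rw [Finset.card_image_of_injOn (relA_injOn hn), Finset.card_image_of_injOn (relB_injOn hn)]
  rw [Finset.card_range, Nat.card_Ico]
  omega
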